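/- For a weighted Laplacian L of a connected graph, there exists a unique symmetric positive semidefinite real matrix X such that X·L = I − 1·e₁ᵀ and X·e₁ = 0, where e₁ is the first standard basis vector and 1 is the all-ones vector. -/

import Mathlib

open Matrix

/-- for a weighted Laplacian `L` of a connected graph (symmetric,
positive semidefinite, kernel spanned by the all-ones vector), there is a unique
symmetric positive semidefinite matrix `X` with `X·L = I − 1·e₁ᵀ` and `X·e₁ = 0`. -/
theorem stmt_2 {n : ℕ} (L : Matrix (Fin (n+1)) (Fin (n+1)) ℝ)
    (hsym : L.IsSymm) (hpsd : L.PosSemidef)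
    (hker : ∀ v : Fin (n+1) → ℝ, L.mulVec v = 0 ↔ ∃ c : ℝ, v = fun _ => c) :
    ∃! X : Matrix (Fin (n+1)) (Fin (n+1)) ℝ,
      X.IsSymm ∧ X.PosSemidef ∧
      X * L = 1 - Matrix.of (fun _ j => if j = (0 : Fin (n+1)) then (1:ℝ) else 0) ∧
      X.mulVec (Pi.single 0 1) = 0 := by
  classical
  -- grounded Laplacian
  set L₀ : Matrix (Fin n) (Fin n) ℝ := L.submatrix Fin.succ Fin.succ with hL₀def
  have hL1 : L.mulVec (fun _ => (1:ℝ)) = 0 := (hker _).mpr ⟨1, rfl⟩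
  -- L₀ is positive definite
  have hL₀pd : L₀.PosDef := by
    rw [Matrix.posDef_iff_dotProduct_mulVec]
    constructor
    · show L₀.conjTranspose = L₀
      ext i j
      simpa [hL₀def] using congrFun (congrFun hsym i.succ) j.succ
    · intro x hx
      set v : Fin (n+1) → ℝ := Fin.cases 0 x with hvdef
      have hmv : ∀ i : Fin n, (L *ᵥ v) i.succ = (L₀ *ᵥ x) i := by
        intro i
        show ∑ j, L i.succ j * v j = _
        rw [Fin.sum_univ_succ]
        simp [hvdef, Matrix.mulVec, dotProduct, hL₀def]
      have hquad : star x ⬝ᵥ L₀ *ᵥ x = star v ⬝ᵥ L *ᵥ v := by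
        show ∑ i, x i * (L₀ *ᵥ x) i = ∑ i, v i * (L *ᵥ v) i
        rw [Fin.sum_univ_succ]
        simp only [hmv]
        simp [hvdef]
      have hnn : 0 ≤ star x ⬝ᵥ L₀ *ᵥ x := by
        rw [hquad]; exact hpsd.dotProduct_mulVec_nonneg v
      rcases lt_or_eq_of_le hnn with h | h
      · exact h
      · exfalso
        have h0 : L *ᵥ v = 0 := (hpsd.dotProduct_mulVec_zero_iff v).mp (by rw [← hquad, ← h])
        obtain ⟨c, hc⟩ := (hker v).mp h0
        have hc0 : c = 0 := by
          have := congrFun hc 0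
          simpa [hvdef] using this.symm
        apply hx
        funext i
        have := congrFun hc i.succ
        simpa [hvdef, hc0] using this
  have hdet : IsUnit L₀.det := hL₀pd.det_pos.ne'.isUnit
  set M : Matrix (Fin n) (Fin n) ℝ := L₀⁻¹ with hMdef
  have hMpd : M.PosDef := hL₀pd.inv
  have hML₀ : M * L₀ = 1 := Matrix.nonsing_inv_mul _ hdet
  -- the candidate
  set X : Matrix (Fin (n+1)) (Fin (n+1)) ℝ :=
    Matrix.of (fun i j => Fin.cases 0 (fun i' => Fin.cases 0 (fun j' => M i' j') j) i)
    with hXdef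
  have hX00 : ∀ j, X 0 j = 0 := fun j => rfl
  have hXs0 : ∀ i, X (Fin.succ i) 0 = 0 := fun i => rfl
  have hXss : ∀ i j, X (Fin.succ i) (Fin.succ j) = M i j := fun i j => rfl
  -- each row of L sums to zero
  have hrow : ∀ i : Fin (n+1), ∑ j, L i j = 0 := by
    intro i
    have := congrFun hL1 i
    simpa [Matrix.mulVec, dotProduct] using this
  have hXsymm : X.IsSymm := by
    ext i j
    refine Fin.cases ?_ (fun i' => ?_) i
    · refine Fin.cases rfl (fun j' => rfl) j
    · refine Fin.cases rfl (fun j' => ?_) j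
      show X j'.succ i'.succ = X i'.succ j'.succ
      rw [hXss, hXss]
      have h := congrFun (congrFun hMpd.isHermitian j') i'
      simp only [Matrix.conjTranspose_apply, RCLike.star_def, starRingEnd_apply,
        star_trivial] at h
      linarith
  have hXmv : ∀ y : Fin (n+1) → ℝ, X *ᵥ y = Fin.cases 0 (M *ᵥ (y ∘ Fin.succ)) := by
    intro y
    funext i
    refine Fin.cases ?_ (fun i' => ?_) i
    · show ∑ j, X 0 j * y j = 0
      simp [hX00]
    · show ∑ j, X i'.succ j * y j = (M *ᵥ (y ∘ Fin.succ)) i'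
      rw [Fin.sum_univ_succ, hXs0]
      simp [hXss, Matrix.mulVec, dotProduct]
  have hXpsd : X.PosSemidef := by
    rw [Matrix.posSemidef_iff_dotProduct_mulVec]
    constructor
    · show Xᴴ = X
      rw [Matrix.conjTranspose_eq_transpose_of_trivial]
      exact hXsymm
    · intro x
      rw [hXmv]
      show 0 ≤ ∑ i, x i * _
      rw [Fin.sum_univ_succ]
      simpa [dotProduct] using hMpd.posSemidef.dotProduct_mulVec_nonneg (x ∘ Fin.succ)
  have hXL : X * L = 1 - Matrix.of (fun _ j => if j = (0 : Fin (n+1)) then (1:ℝ) else 0) := by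
    ext i j
    refine Fin.cases ?_ (fun i' => ?_) i
    · show ∑ k, X 0 k * L k j = _
      have h0 : ∑ k, X 0 k * L k j = 0 := by simp [hX00]
      rw [h0]
      refine Fin.cases ?_ (fun j' => ?_) j
      · simp [Matrix.sub_apply, Matrix.one_apply]
      · simp [Matrix.sub_apply, Matrix.one_apply, Ne.symm (Fin.succ_ne_zero j'),
          Fin.succ_ne_zero j']
    · show ∑ k, X i'.succ k * L k j = _
      rw [Fin.sum_univ_succ, hXs0]
      simp only [hXss, zero_mul, zero_add]
      refine Fin.cases ?_ (fun j' => ?_) j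
      · -- j = 0 : sum equals -1
        have hcol : ∀ k : Fin n, L k.succ 0 = -∑ j', L₀ k j' := by
          intro k
          have := hrow k.succ
          rw [Fin.sum_univ_succ] at this
          have h2 : L k.succ 0 + ∑ j', L₀ k j' = 0 := by
            simpa [hL₀def] using this
          linarith
        have : ∑ k, M i' k * L k.succ 0 = -∑ j', (M * L₀) i' j' := by
          simp only [hcol, mul_neg, Finset.mul_sum, Finset.sum_neg_distrib, neg_inj,
            Matrix.mul_apply]
          rw [Finset.sum_comm]
        rw [this, hML₀]
        simp [Matrix.one_apply, Matrix.sub_apply, Fin.succ_ne_zero,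
          Finset.sum_ite_eq', Matrix.one_apply]
      · -- j = succ j'
        have : ∑ k, M i' k * L k.succ j'.succ = (M * L₀) i' j' := by
          simp [Matrix.mul_apply, hL₀def]
        rw [this, hML₀]
        simp [Matrix.one_apply, Matrix.sub_apply, Fin.succ_ne_zero,
          Fin.succ_inj]
  have hsingle : (Pi.single (0:Fin (n+1)) (1:ℝ)) ∘ Fin.succ = (0 : Fin n → ℝ) := by
    funext k
    simp [Pi.single_apply, Fin.succ_ne_zero k]
  have hXe : X *ᵥ (Pi.single (0 : Fin (n+1)) (1:ℝ)) = 0 := by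
    rw [hXmv, hsingle]
    funext i
    refine Fin.cases ?_ (fun i' => ?_) i <;> simp
  refine ⟨X, ⟨hXsymm, hXpsd, hXL, hXe⟩, ?_⟩
  rintro Y ⟨hYs, hYp, hYm, hYv⟩
  ext i j
  -- the i-th row of Y - X is killed by L
  set r : Fin (n+1) → ℝ := fun k => Y i k - X i k with hrdef
  have hrL : L *ᵥ r = 0 := by
    funext l
    have h1 : ((Y * L) i l) = ((X * L) i l) := by rw [hYm, hXL]
    show ∑ k, L l k * r k = 0
    have : ∑ k, L l k * r k = ∑ k, r k * L k l := by
      congr 1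
      funext k
      have hskl := congrFun (congrFun hsym l) k
      simp only [Matrix.transpose_apply] at hskl
      rw [hskl]; ring
    rw [this]
    simp only [hrdef, sub_mul, Finset.sum_sub_distrib]
    have h2 : ∑ k, Y i k * L k l = ∑ k, X i k * L k l := by
      simpa [Matrix.mul_apply] using h1
    rw [h2, sub_self]
  obtain ⟨c, hc⟩ := (hker r).mp hrL
  have hc0 : c = 0 := by
    have hY0 : Y i 0 = 0 := by
      have := congrFun hYv i
      simpa [Matrix.mulVec, dotProduct, Pi.single_apply] using this
    have hX0 : X i 0 = 0 := by
      have := congrFun hXe i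
      simpa [Matrix.mulVec, dotProduct, Pi.single_apply] using this
    have := congrFun hc 0
    simp only [hrdef] at this
    rw [hY0, hX0, sub_self] at this
    exact this.symm
  have := congrFun hc j
  simp only [hrdef, hc0] at this
  linarith
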